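/- Let V = V₁ ⊔ V₂ ⊔ … ⊔ V_m be a partition of the vertex set (m ≥ 1, each V_i nonempty), and let G = (V,w) be a weighted graph with w(u,v) = 0 whenever u and v lie in different parts. Let G_i denote the weighted graph induced on V_i (with weight function the restriction of w). Then ω_G* ≤ Σ_{i=1}^m ω_{G_i}*, where for a one-vertex part the optimal cost is 0. -/

import Mathlib

open Finset

inductive BTree (V : Type) : Type
  | leaf : V → BTree V
  | node : BTree V → BTree V → BTree V
  deriving DecidableEq

namespace BTree

variable {V : Type} [DecidableEq V]

def leavesList : BTree V → List V
  | leaf x => [x]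
  | node L R => L.leavesList ++ R.leavesList

def leaves (T : BTree V) : Finset V :=
  T.leavesList.toFinset

def cluster : BTree V → V → V → Finset V
  | leaf x, _, _ => {x}
  | node L R, u, v =>
    if u ∈ L.leaves ∧ v ∈ L.leaves then L.cluster u v
    else if u ∈ R.leaves ∧ v ∈ R.leaves then R.cluster u v
    else (node L R).leaves

end BTree

section
variable {V : Type} [Fintype V] [DecidableEq V]

def IsHC (T : BTree V) : Prop :=
  T.leavesList.Nodup ∧ T.leaves = Finset.univ

def IsWeight (w : V → V → ℝ) : Prop :=
  (∀ u v, 0 ≤ w u v) ∧ (∀ u v, w u v = w v u) ∧ ∀ u, w u u = 0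

noncomputable def cost (w : V → V → ℝ) (T : BTree V) : ℝ :=
  (1 / 2) * ∑ u : V, ∑ v : V, w u v * ((T.cluster u v).card : ℝ)

noncomputable def optCost (w : V → V → ℝ) : ℝ :=
  sInf {c : ℝ | ∃ T : BTree V, IsHC T ∧ cost w T = c}

noncomputable def graphDist (w w' : V → V → ℝ) : ℝ :=
  (1 / 2) * ∑ u : V, ∑ v : V, |w u v - w' u v|

noncomputable def cutW (w : V → V → ℝ) (A B : Finset V) : ℝ :=
  ∑ a ∈ A, ∑ b ∈ B, w a b

def IsEdgeDP (A : (V → V → ℝ) → PMF (BTree V)) (ε : ℝ) : Prop :=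
  ∀ w w' : V → V → ℝ, IsWeight w → IsWeight w' → graphDist w w' ≤ 1 →
    ∀ S : Set (BTree V),
      (A w').toOuterMeasure S ≤ ENNReal.ofReal (Real.exp ε) * (A w).toOuterMeasure S

end

namespace BTree

variable {V W : Type}

def map (f : V → W) : BTree V → BTree W
  | leaf x => leaf (f x)
  | node L R => node (map f L) (map f R)

def combine : BTree V → List (BTree V) → BTree V
  | T, [] => T
  | T, S :: ss => node T (combine S ss)

def ofList : V → List V → BTree V
  | x, [] => leaf x
  | x, _y :: ys => node (leaf x) (ofList _y ys)

lemma leavesList_map (f : V → W) : ∀ T : BTree V, (T.map f).leavesList = T.leavesList.map f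
  | leaf x => rfl
  | node L R => by simp [map, leavesList, leavesList_map f L, leavesList_map f R]

lemma leavesList_ofList : ∀ (x : V) (l : List V), (ofList x l).leavesList = x :: l
  | x, [] => rfl
  | x, y :: ys => by simp [ofList, leavesList, leavesList_ofList y ys]

variable [DecidableEq V] [DecidableEq W]

lemma leaves_node (L R : BTree V) : (node L R).leaves = L.leaves ∪ R.leaves := by
  simp [leaves, leavesList]

lemma leaves_map (f : V → W) (T : BTree V) : (T.map f).leaves = T.leaves.image f := by
  ext a
  simp [leaves, leavesList_map, List.mem_map, Finset.mem_image]

lemma mem_leaves_map {f : V → W} (hf : Function.Injective f) (T : BTree V) (u : V) :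
    f u ∈ (T.map f).leaves ↔ u ∈ T.leaves := by
  rw [leaves_map]
  constructor
  · intro h
    obtain ⟨a, ha, e⟩ := Finset.mem_image.1 h
    rwa [← hf e]
  · intro h
    exact Finset.mem_image_of_mem f h

lemma cluster_map {f : V → W} (hf : Function.Injective f) :
    ∀ (T : BTree V) (u v : V), u ∈ T.leaves → v ∈ T.leaves →
      (T.map f).cluster (f u) (f v) = (T.cluster u v).image f
  | leaf x, u, v, _, _ => by simp [map, cluster]
  | node L R, u, v, hu, hv => by
    show (node (L.map f) (R.map f)).cluster (f u) (f v) = _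
    rw [cluster, cluster]
    simp only [mem_leaves_map hf]
    by_cases h1 : u ∈ L.leaves ∧ v ∈ L.leaves
    · rw [if_pos h1, if_pos h1, cluster_map hf L u v h1.1 h1.2]
    · rw [if_neg h1, if_neg h1]
      by_cases h2 : u ∈ R.leaves ∧ v ∈ R.leaves
      · rw [if_pos h2, if_pos h2, cluster_map hf R u v h2.1 h2.2]
      · rw [if_neg h2, if_neg h2]
        exact leaves_map f (node L R)

lemma mem_leaves_combine : ∀ (T : BTree V) (l : List (BTree V)) (u : V),
    u ∈ (combine T l).leaves ↔ u ∈ T.leaves ∨ ∃ S ∈ l, u ∈ S.leaves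
  | T, [], u => by simp [combine]
  | T, S :: ss, u => by
    show u ∈ (node T (combine S ss)).leaves ↔ _
    rw [leaves_node, Finset.mem_union, mem_leaves_combine S ss u]
    simp only [List.mem_cons]
    constructor
    · rintro (h | h | ⟨S', hS', h⟩)
      · exact Or.inl h
      · exact Or.inr ⟨S, Or.inl rfl, h⟩
      · exact Or.inr ⟨S', Or.inr hS', h⟩
    · rintro (h | ⟨S', (rfl | hS'), h⟩)
      · exact Or.inl h
      · exact Or.inr (Or.inl h)
      · exact Or.inr (Or.inr ⟨S', hS', h⟩)

lemma nodup_leavesList_combine : ∀ (T : BTree V) (l : List (BTree V)),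
    (T :: l).Pairwise (fun a b => Disjoint a.leaves b.leaves) →
    (∀ S ∈ T :: l, S.leavesList.Nodup) →
    (combine T l).leavesList.Nodup
  | T, [], _, hnd => hnd T (by simp)
  | T, S :: ss, hdisj, hnd => by
    have hrec : (combine S ss).leavesList.Nodup :=
      nodup_leavesList_combine S ss hdisj.of_cons
        (fun S' hS' => hnd S' (List.mem_cons_of_mem _ hS'))
    show (T.leavesList ++ (combine S ss).leavesList).Nodup
    rw [List.nodup_append]
    refine ⟨hnd T (by simp), hrec, ?_⟩
    intro a ha c hb hac
    subst hac
    have haT : a ∈ T.leaves := List.mem_toFinset.2 ha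
    have hab : a ∈ (combine S ss).leaves := List.mem_toFinset.2 hb
    rcases (mem_leaves_combine S ss a).1 hab with h | ⟨S', hS', h⟩
    · exact Finset.disjoint_left.1 ((List.pairwise_cons.1 hdisj).1 S (by simp)) haT h
    · exact Finset.disjoint_left.1
        ((List.pairwise_cons.1 hdisj).1 S' (List.mem_cons_of_mem _ hS')) haT h

lemma cluster_combine : ∀ (T : BTree V) (l : List (BTree V)) (S : BTree V) (u v : V),
    S ∈ T :: l →
    (T :: l).Pairwise (fun a b => Disjoint a.leaves b.leaves) →
    u ∈ S.leaves → v ∈ S.leaves →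
    (combine T l).cluster u v = S.cluster u v
  | T, [], S, u, v, hS, _, _, _ => by
    simp only [List.mem_singleton] at hS; subst hS; rfl
  | T, S' :: ss, S, u, v, hS, hdisj, hu, hv => by
    show (node T (combine S' ss)).cluster u v = _
    rcases List.mem_cons.1 hS with rfl | hS'
    · rw [cluster, if_pos ⟨hu, hv⟩]
    · have hdT : Disjoint T.leaves S.leaves := (List.pairwise_cons.1 hdisj).1 S hS'
      have hu' : u ∉ T.leaves := fun h => (Finset.disjoint_left.1 hdT h) hu
      have humem : u ∈ (combine S' ss).leaves := by
        rcases List.mem_cons.1 hS' with h | h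
        · exact (mem_leaves_combine S' ss u).2 (Or.inl (h ▸ hu))
        · exact (mem_leaves_combine S' ss u).2 (Or.inr ⟨S, h, hu⟩)
      have hvmem : v ∈ (combine S' ss).leaves := by
        rcases List.mem_cons.1 hS' with h | h
        · exact (mem_leaves_combine S' ss v).2 (Or.inl (h ▸ hv))
        · exact (mem_leaves_combine S' ss v).2 (Or.inr ⟨S, h, hv⟩)
      rw [cluster, if_neg (fun h => hu' h.1), if_pos ⟨humem, hvmem⟩]
      exact cluster_combine S' ss S u v hS' (List.pairwise_cons.1 hdisj).2 hu hv

end BTree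

lemma exists_isHC (V : Type) [Fintype V] [DecidableEq V] [Nonempty V] :
    ∃ T : BTree V, IsHC T := by
  obtain ⟨x, l, hl⟩ : ∃ x l, (Finset.univ : Finset V).toList = x :: l := by
    cases h : (Finset.univ : Finset V).toList with
    | nil =>
      exfalso
      have := Finset.mem_toList.2 (Finset.mem_univ (Classical.arbitrary V))
      rw [h] at this
      simp at this
    | cons x l => exact ⟨x, l, rfl⟩
  refine ⟨BTree.ofList x l, ?_, ?_⟩
  · rw [BTree.leavesList_ofList, ← hl]
    exact Finset.nodup_toList _
  · show (BTree.ofList x l).leavesList.toFinset = _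
    rw [BTree.leavesList_ofList, ← hl, Finset.toList_toFinset]

lemma cost_nonneg {V : Type} [Fintype V] [DecidableEq V] {w : V → V → ℝ}
    (hw : IsWeight w) (T : BTree V) : 0 ≤ cost w T :=
  mul_nonneg (by norm_num)
    (Finset.sum_nonneg fun u _ => Finset.sum_nonneg fun v _ =>
      mul_nonneg (hw.1 u v) (Nat.cast_nonneg _))

/-- If `V` is partitioned into nonempty parts `V_1,…,V_m` (given by
`b : V → Fin m`, surjective) and the weighted graph `G = (V,w)` has no weight between
different parts, then `ω_G* ≤ Σ_i ω_{G_i}*`, where `G_i` is the induced weighted graph on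
part `i` (a one-vertex part having optimal cost 0). -/
theorem optCost_disjoint_union_le (V : Type) [Fintype V] [DecidableEq V] (m : ℕ)
    (hm : 1 ≤ m) (b : V → Fin m) (hsurj : ∀ i : Fin m, ∃ v : V, b v = i)
    (w : V → V → ℝ) (hw : IsWeight w) (hcross : ∀ u v : V, b u ≠ b v → w u v = 0) :
    optCost w ≤ ∑ i : Fin m, optCost (fun u v : {x : V // b x = i} => w u v) := by
  have hwi : ∀ i : Fin m, IsWeight (fun u v : {x : V // b x = i} => w u v) := fun i =>
    ⟨fun u v => hw.1 u v, fun u v => hw.2.1 u v, fun u => hw.2.2 u⟩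
  have hne : ∀ i : Fin m, Nonempty {x : V // b x = i} := fun i => by
    obtain ⟨v, hv⟩ := hsurj i; exact ⟨⟨v, hv⟩⟩
  have hSne : ∀ i : Fin m,
      {c : ℝ | ∃ T : BTree {x : V // b x = i}, IsHC T ∧
        cost (fun u v : {x : V // b x = i} => w u v) T = c}.Nonempty := fun i => by
    haveI := hne i
    obtain ⟨T, hT⟩ := exists_isHC {x : V // b x = i}
    exact ⟨_, T, hT, rfl⟩
  have hmpos : (0 : ℝ) < (m : ℝ) := by
    exact_mod_cast Nat.lt_of_lt_of_le Nat.zero_lt_one hm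
  refine le_of_forall_pos_le_add fun ε hε => ?_
  have hpick : ∀ i : Fin m, ∃ T : BTree {x : V // b x = i}, IsHC T ∧
      cost (fun u v : {x : V // b x = i} => w u v) T <
        optCost (fun u v : {x : V // b x = i} => w u v) + ε / m := by
    intro i
    obtain ⟨c, ⟨T, hT, hc⟩, hlt⟩ := Real.lt_sInf_add_pos (hSne i) (div_pos hε hmpos)
    exact ⟨T, hT, hc ▸ hlt⟩
  choose pick hpickHC hpickLt using hpick
  obtain ⟨m', rfl⟩ : ∃ m', m = m' + 1 :=
    ⟨m - 1, (Nat.succ_pred_eq_of_pos (Nat.lt_of_lt_of_le Nat.zero_lt_one hm)).symm⟩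
  have hval : ∀ i : Fin (m' + 1),
      Function.Injective (Subtype.val : {x : V // b x = i} → V) :=
    fun i => Subtype.val_injective
  set Ts : Fin (m' + 1) → BTree V := fun i => (pick i).map Subtype.val with hTsdef
  have hmemTs : ∀ (i : Fin (m' + 1)) (u : V), u ∈ (Ts i).leaves ↔ b u = i := by
    intro i u
    rw [hTsdef]
    rw [BTree.leaves_map, (hpickHC i).2]
    simp only [Finset.mem_image, Finset.mem_univ, true_and]
    constructor
    · rintro ⟨⟨x, hx⟩, rfl⟩; exact hx
    · intro h; exact ⟨⟨u, h⟩, rfl⟩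
  have hdisj : ∀ i j : Fin (m' + 1), i ≠ j → Disjoint (Ts i).leaves (Ts j).leaves := by
    intro i j hij
    refine Finset.disjoint_left.2 fun u hu hu' => hij ?_
    rw [← (hmemTs i u).1 hu, (hmemTs j u).1 hu']
  set l : List (BTree V) := List.ofFn (fun j : Fin m' => Ts j.succ) with hldef
  set bigT : BTree V := BTree.combine (Ts 0) l with hbigTdef
  have hcons : Ts 0 :: l = List.ofFn Ts := List.ofFn_succ.symm
  have hpw : (Ts 0 :: l).Pairwise (fun a b => Disjoint a.leaves b.leaves) := by
    rw [hcons, List.pairwise_ofFn]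
    exact fun i j hij => hdisj i j (ne_of_lt hij)
  have hmem_list : ∀ i : Fin (m' + 1), Ts i ∈ Ts 0 :: l := by
    intro i
    rw [hcons]
    exact List.mem_ofFn.2 ⟨i, rfl⟩
  have hHC : IsHC bigT := by
    constructor
    · apply BTree.nodup_leavesList_combine _ _ hpw
      intro S hS
      rw [hcons] at hS
      obtain ⟨i, rfl⟩ := List.mem_ofFn.1 hS
      rw [hTsdef]
      rw [BTree.leavesList_map]
      exact (hpickHC i).1.map (hval i)
    · refine Finset.eq_univ_iff_forall.2 fun u => ?_
      rw [hbigTdef, BTree.mem_leaves_combine]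
      rcases List.mem_cons.1 (hmem_list (b u)) with h | h
      · exact Or.inl (h ▸ (hmemTs (b u) u).2 rfl)
      · exact Or.inr ⟨Ts (b u), h, (hmemTs (b u) u).2 rfl⟩
  have hcard : ∀ (i : Fin (m' + 1)) (u' v' : {x : V // b x = i}),
      (bigT.cluster ↑u' ↑v').card = ((pick i).cluster u' v').card := by
    intro i u' v'
    have h1 : bigT.cluster ↑u' ↑v' = (Ts i).cluster ↑u' ↑v' :=
      BTree.cluster_combine _ _ _ _ _ (hmem_list i) hpw
        ((hmemTs i _).2 u'.2) ((hmemTs i _).2 v'.2)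
    have h2 : (Ts i).cluster ↑u' ↑v' = ((pick i).cluster u' v').image Subtype.val := by
      rw [hTsdef]
      exact BTree.cluster_map (hval i) (pick i) u' v'
        ((hpickHC i).2 ▸ Finset.mem_univ _) ((hpickHC i).2 ▸ Finset.mem_univ _)
    rw [h1, h2, Finset.card_image_of_injective _ (hval i)]
  have hcost : cost w bigT =
      ∑ i : Fin (m' + 1), cost (fun u v : {x : V // b x = i} => w u v) (pick i) := by
    unfold cost
    rw [← Finset.mul_sum]
    congr 1
    rw [← Fintype.sum_fiberwise b (fun u => ∑ v : V, w u v * ((bigT.cluster u v).card : ℝ))]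
    refine Finset.sum_congr rfl fun i _ => ?_
    refine Finset.sum_congr rfl fun u' _ => ?_
    rw [← Fintype.sum_fiberwise b (fun v => w ↑u' v * ((bigT.cluster ↑u' v).card : ℝ))]
    rw [Finset.sum_eq_single i]
    · refine Finset.sum_congr rfl fun v' _ => ?_
      rw [hcard i u' v']
    · intro j _ hji
      refine Finset.sum_eq_zero fun v' _ => ?_
      have hz : w ↑u' ↑v' = 0 := by
        apply hcross
        rw [u'.2, v'.2]
        exact fun h => hji (h ▸ rfl)
      rw [hz, zero_mul]
    · intro h; exact absurd (Finset.mem_univ i) h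
  have hbdd : BddBelow {c : ℝ | ∃ T : BTree V, IsHC T ∧ cost w T = c} :=
    ⟨0, fun c hc => by obtain ⟨T, _, hct⟩ := hc; exact hct ▸ cost_nonneg hw T⟩
  have h1 : optCost w ≤ cost w bigT := csInf_le hbdd ⟨bigT, hHC, rfl⟩
  have hsum : ∑ i : Fin (m' + 1), (ε / ((m' + 1 : ℕ) : ℝ)) = ε := by
    rw [Finset.sum_const, Finset.card_univ, Fintype.card_fin, nsmul_eq_mul]
    rw [mul_div_cancel₀]
    exact_mod_cast Nat.succ_ne_zero m'
  calc optCost w ≤ cost w bigT := h1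
    _ = ∑ i : Fin (m' + 1), cost (fun u v : {x : V // b x = i} => w u v) (pick i) := hcost
    _ ≤ ∑ i : Fin (m' + 1),
          (optCost (fun u v : {x : V // b x = i} => w u v) + ε / ((m' + 1 : ℕ) : ℝ)) :=
        Finset.sum_le_sum fun i _ => (hpickLt i).le
    _ = ∑ i : Fin (m' + 1), optCost (fun u v : {x : V // b x = i} => w u v) + ε := by
        rw [Finset.sum_add_distrib, hsum]
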